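/- Let m, n ≥ 1, let A ∈ ℝ^{m×n} and b ∈ ℝ^m, let J be a nonempty subset of the column indices {1,…,n}, and suppose that for each j ∉ J there exist real scalars η_{ij} (i ∈ J) with a_{kj} = max_{i∈J}(a_{ki} + η_{ij}) for every row k. If y ∈ ℝ^J is a solution of the column-restricted system with matrix (a_{ki})_{k∈{1,…,m}, i∈J} and right-hand side b, then the vector x ∈ ℝ^n defined by x_i = y_i for i ∈ J and x_j = min_{i∈J}(y_i − η_{ij}) for j ∉ J is a solution of the full max-plus linear system AX=b. -/
import Mathlib


open Finset

/-- `x` is a solution of the max-plus linear system `AX = b`: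
for every row `i`, `max_j (a_{ij} + x_j) = b_i`. -/
def IsMaxPlusSolution {m n : ℕ} (hn : 0 < n) (A : Fin m → Fin n → ℝ)
    (b : Fin m → ℝ) (x : Fin n → ℝ) : Prop :=
  ∀ i : Fin m, (univ.sup' ⟨⟨0, hn⟩, mem_univ _⟩ fun j => A i j + x j) = b i

/-- If every column of `A` outside the nonempty column set `J` is a max-plus linear
combination (with coefficients `η i j`) of the columns in `J`, and `y` solves the
column-restricted system, then `x` with `x_i = y_i` on `J` and
`x_j = min_{i ∈ J}(y_i - η_{ij})` off `J` solves the full system `AX = b`. -/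
theorem stmt_11 (m n : ℕ) (hm : 0 < m) (hn : 0 < n)
    (A : Fin m → Fin n → ℝ) (b : Fin m → ℝ)
    (J : Finset (Fin n)) (hJ : J.Nonempty)
    (η : Fin n → Fin n → ℝ)
    (hdep : ∀ j ∉ J, ∀ k : Fin m, A k j = J.sup' hJ fun i => A k i + η i j)
    (y : Fin n → ℝ)
    (hy : ∀ k : Fin m, (J.sup' hJ fun i => A k i + y i) = b k)
    (x : Fin n → ℝ)
    (hxJ : ∀ i ∈ J, x i = y i)
    (hxJc : ∀ j ∉ J, x j = J.inf' hJ fun i => y i - η i j) :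
    IsMaxPlusSolution hn A b x := by
  intro k
  apply le_antisymm
  · apply Finset.sup'_le
    intro j _
    by_cases hj : j ∈ J
    · rw [hxJ j hj, ← hy k]
      exact Finset.le_sup' (fun i => A k i + y i) hj
    · rw [hxJc j hj, hdep j hj k]
      obtain ⟨i0, hi0, hEq⟩ := Finset.exists_mem_eq_sup' hJ (fun i => A k i + η i j)
      rw [hEq]
      have h1 : (J.inf' hJ fun i => y i - η i j) ≤ y i0 - η i0 j :=
        Finset.inf'_le _ hi0
      have h2 : A k i0 + y i0 ≤ b k := by
        rw [← hy k]; exact Finset.le_sup' (fun i => A k i + y i) hi0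
      linarith
  · rw [← hy k]
    apply Finset.sup'_le
    intro i hi
    have := Finset.le_sup' (fun j => A k j + x j) (Finset.mem_univ i)
    rwa [hxJ i hi] at this
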